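/- Let (I, E) be a finite connected simple graph, Φ : I → ℝ, and let BS(ρ) := Σ_{{i,j}∈E} [ F(ρ_j − ρ_i) + F(ρ_i − ρ_j) − (π/2)(ρ_i + ρ_j) ] + Σ_{i∈I} Φ_i ρ_i with F(x) := ∫_{−∞}^{x} arctan(e^t) dt. Then the Hessian quadratic form of BS at any point ρ satisfies xᵀ BS''(ρ) x = Σ_{{i,j}∈E} (x_j − x_i)² / cosh(ρ_j − ρ_i), and this form is strictly positive for every nonzero x ∈ ℝ^I with Σ_{i∈I} x_i = 0; hence BS is strictly convex on the hyperplane {ρ : Σ_i ρ_i = 0}, and has at most one critical point on this hyperplane. -/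

import Mathlib

noncomputable section

/-- `F x = ∫_{-∞}^x arctan (e^t) dt`. -/
def Fint (x : ℝ) : ℝ := ∫ t in Set.Iio x, Real.arctan (Real.exp t)

/-- The Bobenko–Springborn functional
`BS(ρ) = Σ_{{i,j}∈E} [F(ρ_j-ρ_i) + F(ρ_i-ρ_j) - (π/2)(ρ_i+ρ_j)] + Σ_i Φ_i ρ_i`. -/
def BS {I : Type*} [Fintype I] [DecidableEq I] (G : SimpleGraph I) [DecidableRel G.Adj]
    (Φ : I → ℝ) (ρ : I → ℝ) : ℝ :=
  (∑ e ∈ G.edgeFinset,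
    Sym2.lift
      ⟨fun i j => Fint (ρ j - ρ i) + Fint (ρ i - ρ j) - Real.pi / 2 * (ρ i + ρ j),
       fun i j => by ring⟩ e)
  + ∑ i, Φ i * ρ i

set_option linter.unusedSectionVars false

open MeasureTheory

lemma arctan_exp_nonneg (t : ℝ) : 0 ≤ Real.arctan (Real.exp t) := by
  rw [← Real.arctan_zero]
  exact Real.arctan_strictMono.monotone (Real.exp_pos t).le

lemma arctan_exp_le (t : ℝ) : Real.arctan (Real.exp t) ≤ Real.exp t := by
  have h := Real.le_tan (arctan_exp_nonneg t) (Real.arctan_lt_pi_div_two _)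
  rwa [Real.tan_arctan] at h

lemma arctanExp_integrableOn (x : ℝ) :
    IntegrableOn (fun t => Real.arctan (Real.exp t)) (Set.Iic x) := by
  have hexp : IntegrableOn Real.exp (Set.Iic x) := integrableOn_exp_Iic x
  refine hexp.mono' ?_ ?_
  · exact (Real.continuous_arctan.comp Real.continuous_exp).aestronglyMeasurable
  · filter_upwards with t
    rw [Real.norm_eq_abs, abs_of_nonneg (arctan_exp_nonneg t)]
    exact arctan_exp_le t

lemma hasDerivAt_Fint (x : ℝ) : HasDerivAt Fint (Real.arctan (Real.exp x)) x := by
  set f : ℝ → ℝ := fun t => Real.arctan (Real.exp t) with hf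
  have hcont : Continuous f := Real.continuous_arctan.comp Real.continuous_exp
  have key : ∀ y, Fint y = Fint x + ∫ t in x..y, f t := by
    intro y
    have h := intervalIntegral.integral_Iic_sub_Iic (arctanExp_integrableOn x)
      (arctanExp_integrableOn y)
    simp only [Fint, ← MeasureTheory.integral_Iic_eq_integral_Iio]
    linarith
  have h := (intervalIntegral.integral_hasDerivAt_right
    (hcont.intervalIntegrable x x)
    (hcont.stronglyMeasurableAtFilter volume (nhds x))
    hcont.continuousAt).const_add (Fint x)
  have : (fun y => Fint x + ∫ t in x..y, f t) = Fint := funext fun y => (key y).symm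
  rwa [this] at h

lemma hasDerivAt_arctanExp (x : ℝ) :
    HasDerivAt (fun t => Real.arctan (Real.exp t)) (1 / (2 * Real.cosh x)) x := by
  have h := (Real.hasDerivAt_arctan (Real.exp x)).comp x (Real.hasDerivAt_exp x)
  refine h.congr_deriv ?_
  have hx := Real.exp_pos x
  rw [Real.cosh_eq, Real.exp_neg]
  field_simp
  ring

section Graph

variable {I : Type*} [Fintype I] [DecidableEq I]

/-- coordinate projection as a CLM -/
def pr (i : I) : (I → ℝ) →L[ℝ] ℝ := ContinuousLinearMap.proj i

/-- first derivative, edge part -/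
def dE (ρ : I → ℝ) (i j : I) : (I → ℝ) →L[ℝ] ℝ :=
  Real.arctan (Real.exp (ρ j - ρ i)) • (pr j - pr i)
    + Real.arctan (Real.exp (ρ i - ρ j)) • (pr i - pr j)
    - (Real.pi / 2) • (pr i + pr j)

lemma dE_symm (ρ : I → ℝ) (i j : I) : dE ρ i j = dE ρ j i := by
  unfold dE
  rw [add_comm (pr i) (pr j), add_comm (Real.arctan (Real.exp (ρ j - ρ i)) • (pr j - pr i))]

def BSd (G : SimpleGraph I) [DecidableRel G.Adj] (Φ : I → ℝ) (ρ : I → ℝ) :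
    (I → ℝ) →L[ℝ] ℝ :=
  (∑ e ∈ G.edgeFinset, Sym2.lift ⟨dE ρ, dE_symm ρ⟩ e) + ∑ i, Φ i • pr i

/-- second derivative, edge part -/
def dE2 (ρ : I → ℝ) (i j : I) : (I → ℝ) →L[ℝ] (I → ℝ) →L[ℝ] ℝ :=
  ((1 / (2 * Real.cosh (ρ j - ρ i))) • (pr j - pr i)).smulRight (pr j - pr i)
    + ((1 / (2 * Real.cosh (ρ i - ρ j))) • (pr i - pr j)).smulRight (pr i - pr j)

set_option synthInstance.maxHeartbeats 1000000 in
lemma dE2_symm (ρ : I → ℝ) (i j : I) : dE2 ρ i j = dE2 ρ j i := by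
  unfold dE2
  exact add_comm
    (((1 / (2 * Real.cosh (ρ j - ρ i))) • (pr j - pr i)).smulRight (pr j - pr i))
    (((1 / (2 * Real.cosh (ρ i - ρ j))) • (pr i - pr j)).smulRight (pr i - pr j))

def BSd2 (G : SimpleGraph I) [DecidableRel G.Adj] (ρ : I → ℝ) :
    (I → ℝ) →L[ℝ] (I → ℝ) →L[ℝ] ℝ :=
  ∑ e ∈ G.edgeFinset, Sym2.lift ⟨dE2 ρ, dE2_symm ρ⟩ e

variable (G : SimpleGraph I) [DecidableRel G.Adj] (Φ : I → ℝ)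

lemma hasFDerivAt_BS (ρ : I → ℝ) : HasFDerivAt (BS G Φ) (BSd G Φ ρ) ρ := by
  unfold BS BSd
  apply HasFDerivAt.add
  · apply HasFDerivAt.fun_sum
    intro e he
    clear he
    induction e using Sym2.ind with
    | _ i j =>
      simp only [Sym2.lift_mk]
      have h1 : HasFDerivAt (fun ρ : I → ℝ => ρ j - ρ i) (pr j - pr i) ρ :=
        (pr (I := I) j).hasFDerivAt.sub (pr i).hasFDerivAt
      have h2 : HasFDerivAt (fun ρ : I → ℝ => ρ i - ρ j) (pr i - pr j) ρ :=
        (pr (I := I) i).hasFDerivAt.sub (pr j).hasFDerivAt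
      have h3 : HasFDerivAt (fun ρ : I → ℝ => Real.pi / 2 * (ρ i + ρ j))
          ((Real.pi / 2) • (pr i + pr j)) ρ :=
        ((pr (I := I) i).hasFDerivAt.add (pr j).hasFDerivAt).const_mul (Real.pi / 2)
      exact (((hasDerivAt_Fint _).comp_hasFDerivAt ρ h1).add
        ((hasDerivAt_Fint _).comp_hasFDerivAt ρ h2)).sub h3
  · have : HasFDerivAt (fun ρ : I → ℝ => ∑ i, Φ i * ρ i) (∑ i, Φ i • pr i) ρ := by
      apply HasFDerivAt.fun_sum
      intro i _
      exact (pr (I := I) i).hasFDerivAt.const_mul (Φ i)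
    exact this

lemma hasFDerivAt_BSd (ρ : I → ℝ) : HasFDerivAt (BSd G Φ) (BSd2 G ρ) ρ := by
  unfold BSd BSd2
  apply HasFDerivAt.add_const
  apply HasFDerivAt.fun_sum
  intro e he
  clear he
  induction e using Sym2.ind with
  | _ i j =>
    simp only [Sym2.lift_mk]
    unfold dE dE2
    have h1 : HasFDerivAt (fun ρ : I → ℝ => ρ j - ρ i) (pr j - pr i) ρ :=
      (pr (I := I) j).hasFDerivAt.sub (pr i).hasFDerivAt
    have h2 : HasFDerivAt (fun ρ : I → ℝ => ρ i - ρ j) (pr i - pr j) ρ :=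
      (pr (I := I) i).hasFDerivAt.sub (pr j).hasFDerivAt
    have hc1 : HasFDerivAt (fun ρ : I → ℝ => Real.arctan (Real.exp (ρ j - ρ i)))
        ((1 / (2 * Real.cosh (ρ j - ρ i))) • (pr j - pr i)) ρ :=
      (hasDerivAt_arctanExp _).comp_hasFDerivAt ρ h1
    have hc2 : HasFDerivAt (fun ρ : I → ℝ => Real.arctan (Real.exp (ρ i - ρ j)))
        ((1 / (2 * Real.cosh (ρ i - ρ j))) • (pr i - pr j)) ρ :=
      (hasDerivAt_arctanExp _).comp_hasFDerivAt ρ h2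
    exact ((hc1.smul_const (pr j - pr i)).add (hc2.smul_const (pr i - pr j))).sub_const _

lemma BSd2_apply (ρ x : I → ℝ) :
    BSd2 G ρ x x =
      ∑ e ∈ G.edgeFinset,
        Sym2.lift
          ⟨fun i j => (x j - x i) ^ 2 / Real.cosh (ρ j - ρ i),
           fun i j => by
            dsimp only
            rw [show Real.cosh (ρ j - ρ i) = Real.cosh (ρ i - ρ j) from by
              rw [← Real.cosh_abs, abs_sub_comm, Real.cosh_abs]]
            ring⟩ e := by
  unfold BSd2
  simp only [ContinuousLinearMap.sum_apply]
  refine Finset.sum_congr rfl fun e _ => ?_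
  induction e using Sym2.ind with
  | _ i j =>
    simp only [Sym2.lift_mk]
    unfold dE2
    have hc : Real.cosh (ρ i - ρ j) = Real.cosh (ρ j - ρ i) := by
      rw [← Real.cosh_abs, abs_sub_comm, Real.cosh_abs]
    simp only [ContinuousLinearMap.add_apply, ContinuousLinearMap.smulRight_apply,
      ContinuousLinearMap.smul_apply, ContinuousLinearMap.sub_apply, pr,
      ContinuousLinearMap.proj_apply, smul_eq_mul, hc]
    have h0 : Real.cosh (ρ j - ρ i) ≠ 0 := (Real.cosh_pos _).ne'
    field_simp
    ring

end Graph

section Main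

variable {I : Type*} [Fintype I] [DecidableEq I]
variable (G : SimpleGraph I) [DecidableRel G.Adj] (Φ : I → ℝ)

lemma Q_pos (hconn : G.Connected) (ρ x : I → ℝ) (hx : x ≠ 0) (hsum : ∑ i, x i = 0) :
    0 < ∑ e ∈ G.edgeFinset,
        Sym2.lift
          ⟨fun i j => (x j - x i) ^ 2 / Real.cosh (ρ j - ρ i),
           fun i j => by
            dsimp only
            rw [show Real.cosh (ρ j - ρ i) = Real.cosh (ρ i - ρ j) from by
              rw [← Real.cosh_abs, abs_sub_comm, Real.cosh_abs]]
            ring⟩ e := by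
  have hnonneg : ∀ e ∈ G.edgeFinset,
      0 ≤ Sym2.lift
        ⟨fun i j => (x j - x i) ^ 2 / Real.cosh (ρ j - ρ i),
         fun i j => by
          dsimp only
          rw [show Real.cosh (ρ j - ρ i) = Real.cosh (ρ i - ρ j) from by
            rw [← Real.cosh_abs, abs_sub_comm, Real.cosh_abs]]
          ring⟩ e := by
    intro e _
    induction e using Sym2.ind with
    | _ i j =>
      rw [Sym2.lift_mk]
      positivity
  have hex : ∃ i j, G.Adj i j ∧ x i ≠ x j := by
    by_contra h
    push_neg at h
    have hwalk : ∀ {i j : I} (_ : G.Walk i j), x i = x j := by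
      intro i j w
      induction w with
      | nil => rfl
      | cons ha _ ih => exact (h _ _ ha).trans ih
    have hconst : ∀ i j, x i = x j := fun i j => (hconn i j).elim fun w => hwalk w
    have hne : Nonempty I := hconn.nonempty
    obtain ⟨i₀⟩ := hne
    have hxi : ∀ i, x i = x i₀ := fun i => hconst i i₀
    have hcard : (Fintype.card I : ℝ) * x i₀ = 0 := by
      rw [← hsum, Finset.sum_congr rfl fun i _ => hxi i]
      simp [Finset.sum_const, mul_comm]
    have hc0 : (Fintype.card I : ℝ) ≠ 0 := by
      have : Nonempty I := ⟨i₀⟩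
      exact_mod_cast Fintype.card_ne_zero
    have : x i₀ = 0 := by
      rcases mul_eq_zero.1 hcard with h' | h'
      · exact absurd h' hc0
      · exact h'
    exact hx (funext fun i => by rw [hxi i, this]; rfl)
  obtain ⟨i, j, hadj, hne⟩ := hex
  refine Finset.sum_pos' hnonneg ⟨s(i, j), ?_, ?_⟩
  · exact SimpleGraph.mem_edgeFinset.2 hadj
  · rw [Sym2.lift_mk]
    have : x j - x i ≠ 0 := sub_ne_zero.2 (Ne.symm hne)
    positivity

lemma line_hasDerivAt (ρ v : I → ℝ) (t : ℝ) :
    HasDerivAt (fun s => BS G Φ (ρ + s • v)) (BSd G Φ (ρ + t • v) v) t := by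
  have hline : HasDerivAt (fun s : ℝ => ρ + s • v) v t := by
    simpa using ((hasDerivAt_id t).smul_const v).const_add ρ
  exact (hasFDerivAt_BS G Φ _).comp_hasDerivAt t hline

lemma line_deriv2 (ρ v : I → ℝ) (t : ℝ) :
    HasDerivAt (fun s => BSd G Φ (ρ + s • v) v) (BSd2 G (ρ + t • v) v v) t := by
  have hline : HasDerivAt (fun s : ℝ => ρ + s • v) v t := by
    simpa using ((hasDerivAt_id t).smul_const v).const_add ρ
  have h := (hasFDerivAt_BSd G Φ _).comp_hasDerivAt t hline
  simpa using h.clm_apply (hasDerivAt_const t v)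

lemma gderiv_strictMono (hconn : G.Connected) (ρ v : I → ℝ) (hv : v ≠ 0)
    (hsv : ∑ i, v i = 0) : StrictMono fun s : ℝ => BSd G Φ (ρ + s • v) v := by
  apply strictMono_of_deriv_pos
  intro t
  rw [(line_deriv2 G Φ ρ v t).deriv, BSd2_apply]
  exact Q_pos G hconn _ v hv hsv

end Main

/-- The Hessian quadratic form of `BS` is
`xᵀ BS''(ρ) x = Σ_{{i,j}∈E} (x_j - x_i)² / cosh (ρ_j - ρ_i)`; it is positive on nonzero
vectors with coordinate sum 0 when the graph is connected, so `BS` is strictly convex on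
the hyperplane `Σ_i ρ_i = 0` and has at most one critical point there. -/
theorem BS_hessian_strictConvex {I : Type*} [Fintype I] [DecidableEq I]
    (G : SimpleGraph I) [DecidableRel G.Adj] (hconn : G.Connected) (Φ : I → ℝ) :
    (∀ ρ x : I → ℝ,
      iteratedFDeriv ℝ 2 (BS G Φ) ρ ![x, x] =
        ∑ e ∈ G.edgeFinset,
          Sym2.lift
            ⟨fun i j => (x j - x i) ^ 2 / Real.cosh (ρ j - ρ i),
             fun i j => by
              show (x j - x i) ^ 2 / Real.cosh (ρ j - ρ i)
                  = (x i - x j) ^ 2 / Real.cosh (ρ i - ρ j)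
              have h2 : Real.cosh (ρ j - ρ i) = Real.cosh (ρ i - ρ j) := by
                rw [← Real.cosh_abs, abs_sub_comm, Real.cosh_abs]
              rw [h2]; ring⟩ e) ∧
    (∀ ρ x : I → ℝ, x ≠ 0 → ∑ i, x i = 0 →
      0 < iteratedFDeriv ℝ 2 (BS G Φ) ρ ![x, x]) ∧
    StrictConvexOn ℝ {ρ : I → ℝ | ∑ i, ρ i = 0} (BS G Φ) ∧
    (∀ ρ₁ ρ₂ : I → ℝ, ∑ i, ρ₁ i = 0 → ∑ i, ρ₂ i = 0 →
      fderiv ℝ (BS G Φ) ρ₁ = 0 → fderiv ℝ (BS G Φ) ρ₂ = 0 → ρ₁ = ρ₂) := by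
  have hfd : fderiv ℝ (BS G Φ) = BSd G Φ := funext fun ρ => (hasFDerivAt_BS G Φ ρ).fderiv
  have hess : ∀ ρ x : I → ℝ,
      iteratedFDeriv ℝ 2 (BS G Φ) ρ ![x, x] =
        ∑ e ∈ G.edgeFinset,
          Sym2.lift
            ⟨fun i j => (x j - x i) ^ 2 / Real.cosh (ρ j - ρ i),
             fun i j => by
              dsimp only
              rw [show Real.cosh (ρ j - ρ i) = Real.cosh (ρ i - ρ j) from by
                rw [← Real.cosh_abs, abs_sub_comm, Real.cosh_abs]]
              ring⟩ e := by
    intro ρ x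
    rw [iteratedFDeriv_two_apply, hfd, (hasFDerivAt_BSd G Φ ρ).fderiv]
    simp only [Matrix.cons_val_zero, Matrix.cons_val_one, Matrix.head_cons]
    exact BSd2_apply G ρ x
  refine ⟨hess, ?pos, ?convex, ?crit⟩
  case pos =>
    intro ρ x hx hsum
    rw [hess ρ x]
    exact Q_pos G hconn ρ x hx hsum
  case convex =>
    constructor
    · intro a ha b hb s t hs ht hst
      simp only [Set.mem_setOf_eq] at *
      simp only [Pi.add_apply, Pi.smul_apply, smul_eq_mul, Finset.sum_add_distrib,
        ← Finset.mul_sum, ha, hb, mul_zero, add_zero]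
    · intro a ha b hb hab s t hs ht hst
      simp only [Set.mem_setOf_eq] at ha hb
      set v := b - a with hvdef
      have hv : v ≠ 0 := sub_ne_zero.2 (Ne.symm hab)
      have hsv : ∑ i, v i = 0 := by
        simp [hvdef, Finset.sum_sub_distrib, ha, hb]
      set g : ℝ → ℝ := fun u => BS G Φ (a + u • v) with hgdef
      have hgderiv : ∀ u, HasDerivAt g (BSd G Φ (a + u • v) v) u :=
        fun u => line_hasDerivAt G Φ a v u
      have hgdiff : Differentiable ℝ g := fun u => (hgderiv u).differentiableAt
      have hgcont : Continuous g := hgdiff.continuous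
      have hg : StrictConvexOn ℝ Set.univ g := by
        apply strictConvexOn_univ_of_deriv2_pos hgcont
        intro u
        have hd1 : deriv g = fun s => BSd G Φ (a + s • v) v :=
          funext fun s => (hgderiv s).deriv
        rw [Function.iterate_succ_apply', Function.iterate_one, hd1,
          (line_deriv2 G Φ a v u).deriv, BSd2_apply]
        exact Q_pos G hconn _ v hv hsv
      have key := hg.2 (Set.mem_univ (0 : ℝ)) (Set.mem_univ (1 : ℝ))
        (by norm_num) hs ht hst
      have h0 : g 0 = BS G Φ a := by simp [hgdef]
      have h1 : g 1 = BS G Φ b := by simp [hgdef, hvdef]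
      have harg : s • (0 : ℝ) + t • 1 = t := by simp
      have hpt : a + t • v = s • a + t • b := by
        have hs1 : s = 1 - t := by linarith
        rw [hs1, hvdef]
        ext i
        simp only [Pi.add_apply, Pi.smul_apply, Pi.sub_apply, smul_eq_mul]
        ring
      rw [harg] at key
      rw [h0, h1] at key
      have : g t = BS G Φ (s • a + t • b) := by rw [hgdef]; simp only; rw [hpt]
      rw [this] at key
      exact key
  case crit =>
    intro ρ₁ ρ₂ h1 h2 hc1 hc2
    by_contra hne
    set v := ρ₂ - ρ₁ with hvdef
    have hv : v ≠ 0 := sub_ne_zero.2 (Ne.symm hne)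
    have hsv : ∑ i, v i = 0 := by
      simp [hvdef, Finset.sum_sub_distrib, h1, h2]
    have hmono := gderiv_strictMono G Φ hconn ρ₁ v hv hsv
    have e0 : BSd G Φ (ρ₁ + (0 : ℝ) • v) v = 0 := by
      rw [zero_smul, add_zero, ← hfd, hc1]
      rfl
    have e1 : BSd G Φ (ρ₁ + (1 : ℝ) • v) v = 0 := by
      rw [one_smul, hvdef, add_sub_cancel, ← hfd, hc2]
      rfl
    have h01 := hmono zero_lt_one
    simp only [e0, e1] at h01
    exact lt_irrefl 0 h01
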